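/- Let v_1, …, v_n be vectors in ℝ^d and let Q_1, …, Q_n be d×d real positive semidefinite matrices. Then ‖( Σ_{i=1}^n (v_i v_iᵀ − Q_i)² )^{1/2}‖ ≤ sqrt( 2 · max_{1≤i≤n} |v_i|² · ‖Σ_{i=1}^n v_i v_iᵀ‖ ) + sqrt( 2 · max_{1≤i≤n} ‖Q_i‖ · ‖Σ_{i=1}^n Q_i‖ ), where ‖·‖ is the spectral norm and |v| is the Euclidean norm of v ∈ ℝ^d. -/

import Mathlib

open Matrix

/-- The spectral norm (largest singular value / `ℓ²` operator norm) of a real square matrix. -/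
noncomputable def specNorm {d : ℕ} (A : Matrix (Fin d) (Fin d) ℝ) : ℝ :=
  ‖(Matrix.toEuclideanCLM (𝕜 := ℝ) A : EuclideanSpace ℝ (Fin d) →L[ℝ] EuclideanSpace ℝ (Fin d))‖

/-- The positive semidefinite square root of a matrix (junk value `0` if the matrix is
not positive semidefinite). -/
noncomputable def psdSqrt {d : ℕ} (M : Matrix (Fin d) (Fin d) ℝ) : Matrix (Fin d) (Fin d) ℝ :=
  by classical exact if h : M.PosSemidef then
    (h.1.eigenvectorUnitary : Matrix (Fin d) (Fin d) ℝ) *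
      Matrix.diagonal ((RCLike.ofReal : ℝ → ℝ) ∘ Real.sqrt ∘ h.1.eigenvalues) *
      (star h.1.eigenvectorUnitary : Matrix (Fin d) (Fin d) ℝ) else 0

open scoped Matrix.Norms.L2Operator

section Aux

variable {d : ℕ}

open scoped MatrixOrder in
noncomputable def Matrix.PosSemidef.sqrt {X : Matrix (Fin d) (Fin d) ℝ} (_hX : X.PosSemidef) :
    Matrix (Fin d) (Fin d) ℝ := CFC.sqrt X

open scoped MatrixOrder in
lemma Matrix.PosSemidef.posSemidef_sqrt {X : Matrix (Fin d) (Fin d) ℝ} (hX : X.PosSemidef) :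
    hX.sqrt.PosSemidef := nonneg_iff_posSemidef.mp (CFC.sqrt_nonneg X)

open scoped MatrixOrder in
lemma Matrix.PosSemidef.sqrt_mul_self {X : Matrix (Fin d) (Fin d) ℝ} (hX : X.PosSemidef) :
    hX.sqrt * hX.sqrt = X := CFC.sqrt_mul_sqrt_self X (nonneg_iff_posSemidef.mpr hX)

lemma specNorm_eq_norm (A : Matrix (Fin d) (Fin d) ℝ) : specNorm A = ‖A‖ := rfl

lemma dot_eq_inner (x y : Fin d → ℝ) :
    x ⬝ᵥ y = inner ℝ ((WithLp.equiv 2 _).symm x : EuclideanSpace ℝ (Fin d))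
      ((WithLp.equiv 2 _).symm y) := by
  simp [PiLp.inner_apply, dotProduct, mul_comm]

lemma clm_apply (A : Matrix (Fin d) (Fin d) ℝ) (x : Fin d → ℝ) :
    toEuclideanCLM (𝕜 := ℝ) A ((WithLp.equiv 2 _).symm x) = (WithLp.equiv 2 _).symm (A *ᵥ x) := by
  simp [toEuclideanCLM_toLp, Matrix.toLin'_apply]

lemma qf_le_norm (A : Matrix (Fin d) (Fin d) ℝ) (x : Fin d → ℝ) :
    x ⬝ᵥ (A *ᵥ x) ≤ ‖A‖ * (x ⬝ᵥ x) := by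
  set x' : EuclideanSpace ℝ (Fin d) := (WithLp.equiv 2 _).symm x with hx'
  have h1 : x ⬝ᵥ (A *ᵥ x) = inner ℝ x' (toEuclideanCLM (𝕜 := ℝ) A x') := by
    rw [hx', clm_apply, ← dot_eq_inner]
  have h2 : inner ℝ x' (toEuclideanCLM (𝕜 := ℝ) A x') ≤ ‖x'‖ * ‖toEuclideanCLM (𝕜 := ℝ) A x'‖ :=
    real_inner_le_norm _ _
  have h3 : ‖toEuclideanCLM (𝕜 := ℝ) A x'‖ ≤ ‖A‖ * ‖x'‖ :=
    (toEuclideanCLM (𝕜 := ℝ) A).le_opNorm x'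
  have h4 : x ⬝ᵥ x = ‖x'‖ * ‖x'‖ := by
    rw [dot_eq_inner]; exact real_inner_self_eq_norm_mul_norm x'
  nlinarith [norm_nonneg x', norm_nonneg (toEuclideanCLM (𝕜 := ℝ) A x'), norm_nonneg A]

lemma transpose_of_herm {S : Matrix (Fin d) (Fin d) ℝ} (h : S.IsHermitian) : Sᵀ = S := by
  ext i j
  calc Sᵀ i j = S j i := rfl
    _ = star (S j i) := (star_trivial _).symm
    _ = Sᴴ i j := rfl
    _ = S i j := by rw [h]

lemma norm_le_of_qf {X : Matrix (Fin d) (Fin d) ℝ} (hX : X.PosSemidef) {c : ℝ} (hc : 0 ≤ c)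
    (h : ∀ x, x ⬝ᵥ (X *ᵥ x) ≤ c * (x ⬝ᵥ x)) : ‖X‖ ≤ c := by
  set S := hX.sqrt with hSdef
  have hS : S.PosSemidef := hX.posSemidef_sqrt
  have hSH : Sᴴ = S := hS.isHermitian
  have hST : Sᵀ = S := transpose_of_herm hS.isHermitian
  have hmul : S * S = X := hX.sqrt_mul_self
  have hSnorm : ‖S‖ ≤ Real.sqrt c := by
    rw [Matrix.cstar_norm_def]
    refine ContinuousLinearMap.opNorm_le_bound _ (Real.sqrt_nonneg c) fun y => ?_
    set x : Fin d → ℝ := WithLp.equiv 2 _ y with hxdef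
    have hy : y = (WithLp.equiv 2 _).symm x := rfl
    have h1 : ‖toEuclideanCLM (𝕜 := ℝ) S y‖ ^ 2 = (S *ᵥ x) ⬝ᵥ (S *ᵥ x) := by
      rw [hy, clm_apply, dot_eq_inner, ← real_inner_self_eq_norm_sq]
    have h2 : (S *ᵥ x) ⬝ᵥ (S *ᵥ x) = x ⬝ᵥ (X *ᵥ x) := by
      rw [← hmul, ← mulVec_mulVec, Matrix.dotProduct_mulVec x S (S *ᵥ x),
        ← Matrix.mulVec_transpose, hST]
    have h3 : x ⬝ᵥ x = ‖y‖ ^ 2 := by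
      rw [hy, dot_eq_inner, ← real_inner_self_eq_norm_sq]
    have h4 : ‖toEuclideanCLM (𝕜 := ℝ) S y‖ ^ 2 ≤ (Real.sqrt c * ‖y‖) ^ 2 := by
      rw [h1, h2, mul_pow, Real.sq_sqrt hc]
      calc x ⬝ᵥ (X *ᵥ x) ≤ c * (x ⬝ᵥ x) := h x
        _ = c * ‖y‖ ^ 2 := by rw [h3]
    have h5 : 0 ≤ Real.sqrt c * ‖y‖ := mul_nonneg (Real.sqrt_nonneg c) (norm_nonneg y)
    nlinarith [norm_nonneg (toEuclideanCLM (𝕜 := ℝ) S y)]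
  calc ‖X‖ = ‖Sᴴ * S‖ := by rw [hSH, hmul]
    _ = ‖S‖ * ‖S‖ := Matrix.l2_opNorm_conjTranspose_mul_self S
    _ ≤ Real.sqrt c * Real.sqrt c :=
        mul_le_mul hSnorm hSnorm (norm_nonneg _) (Real.sqrt_nonneg c)
    _ = c := Real.mul_self_sqrt hc

lemma norm_mono {X Y : Matrix (Fin d) (Fin d) ℝ} (hX : X.PosSemidef) (hYX : (Y - X).PosSemidef) :
    ‖X‖ ≤ ‖Y‖ := by
  refine norm_le_of_qf hX (norm_nonneg Y) fun x => ?_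
  have h1 := hYX.dotProduct_mulVec_nonneg x
  have h2 := qf_le_norm Y x
  simp only [star_trivial, Matrix.sub_mulVec, dotProduct_sub] at h1
  linarith

lemma vmv_hermitian (v : Fin d → ℝ) : (vecMulVec v v).IsHermitian := by
  ext i j
  simp [conjTranspose_apply, vecMulVec_apply, mul_comm]

lemma vmv_mulVec (v x : Fin d → ℝ) : vecMulVec v v *ᵥ x = (v ⬝ᵥ x) • v := by
  ext i
  simp [mulVec, vecMulVec_apply, dotProduct, Finset.sum_mul, Finset.mul_sum, mul_comm,
    mul_left_comm, mul_assoc]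

lemma vmv_psd (v : Fin d → ℝ) : (vecMulVec v v).PosSemidef := by
  refine Matrix.PosSemidef.of_dotProduct_mulVec_nonneg (vmv_hermitian v) fun x => ?_
  rw [vmv_mulVec]
  simp only [star_trivial, dotProduct_smul, smul_eq_mul]
  rw [dotProduct_comm x v]
  exact mul_self_nonneg _

lemma vmv_sq (v : Fin d → ℝ) :
    vecMulVec v v * vecMulVec v v = (v ⬝ᵥ v) • vecMulVec v v := by
  ext i j
  simp only [mul_apply, vecMulVec_apply, Matrix.smul_apply, smul_eq_mul, dotProduct]
  rw [Finset.sum_mul]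
  exact Finset.sum_congr rfl fun k _ => by ring

lemma psd_smul {X : Matrix (Fin d) (Fin d) ℝ} (hX : X.PosSemidef) {c : ℝ} (hc : 0 ≤ c) :
    (c • X).PosSemidef := by
  refine Matrix.PosSemidef.of_dotProduct_mulVec_nonneg ?_ fun x => ?_
  · ext i j
    have h := hX.1.apply i j
    simp only [star_trivial] at h
    simp [conjTranspose_apply, h]
  · have := hX.dotProduct_mulVec_nonneg x
    simp only [smul_mulVec, dotProduct_smul, smul_eq_mul]
    exact mul_nonneg hc this

lemma psd_sum {ι : Type*} (s : Finset ι) (f : ι → Matrix (Fin d) (Fin d) ℝ)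
    (h : ∀ i ∈ s, (f i).PosSemidef) : (∑ i ∈ s, f i).PosSemidef :=
  Finset.sum_induction f Matrix.PosSemidef (fun _ _ ha hb => ha.add hb) Matrix.PosSemidef.zero h

lemma herm_sq_psd {X : Matrix (Fin d) (Fin d) ℝ} (hX : X.IsHermitian) : (X ^ 2).PosSemidef := by
  rw [pow_two]
  nth_rewrite 1 [← hX]
  exact Matrix.posSemidef_conjTranspose_mul_self X

lemma psd_sq_le {B : Matrix (Fin d) (Fin d) ℝ} (hB : B.PosSemidef) {c : ℝ} (hc : ‖B‖ ≤ c) :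
    (c • B - B * B).PosSemidef := by
  have hc0 : 0 ≤ c := le_trans (norm_nonneg B) hc
  set S := hB.sqrt with hSdef
  have hS : S.PosSemidef := hB.posSemidef_sqrt
  have hSH : Sᴴ = S := hS.isHermitian
  have hmul : S * S = B := hB.sqrt_mul_self
  have hone : ((c : ℝ) • (1 : Matrix (Fin d) (Fin d) ℝ)).PosSemidef := by
    refine Matrix.PosSemidef.of_dotProduct_mulVec_nonneg ?_ fun x => ?_
    · ext i j
      simp [conjTranspose_apply, one_apply, eq_comm]
    · have := Matrix.PosSemidef.one (n := Fin d) (R := ℝ) |>.dotProduct_mulVec_nonneg x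
      simp only [smul_mulVec, dotProduct_smul, smul_eq_mul]
      exact mul_nonneg hc0 (by simpa using this)
  have h1 : ((c • 1 : Matrix (Fin d) (Fin d) ℝ) - B).PosSemidef := by
    refine Matrix.PosSemidef.of_dotProduct_mulVec_nonneg (hone.1.sub hB.1) fun x => ?_
    have hxx : 0 ≤ x ⬝ᵥ x := by
      simp only [dotProduct]
      exact Finset.sum_nonneg fun i _ => mul_self_nonneg _
    have hq := qf_le_norm B x
    have hcc : ‖B‖ * (x ⬝ᵥ x) ≤ c * (x ⬝ᵥ x) := mul_le_mul_of_nonneg_right hc hxx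
    simp only [star_trivial, Matrix.sub_mulVec, dotProduct_sub, smul_mulVec,
      Matrix.one_mulVec, dotProduct_smul, smul_eq_mul]
    linarith
  have h2 := h1.conjTranspose_mul_mul_same (B := S)
  have hSBS : S * B * S = B * B := by
    rw [← hmul]
    simp only [mul_assoc]
  have key : Sᴴ * ((c • 1 : Matrix (Fin d) (Fin d) ℝ) - B) * S = c • B - B * B := by
    rw [hSH, mul_sub, sub_mul, mul_smul_comm, mul_one, smul_mul_assoc, hmul, hSBS]
  rwa [key] at h2

open scoped MatrixOrder in
lemma psdSqrt_eq {M : Matrix (Fin d) (Fin d) ℝ} (hM : M.PosSemidef) :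
    psdSqrt M = hM.sqrt := by
  unfold psdSqrt
  rw [dif_pos hM, Matrix.PosSemidef.sqrt, CFC.sqrt_eq_real_sqrt M (nonneg_iff_posSemidef.mpr hM),
    cfcₙ_eq_cfc (hf0 := Real.sqrt_zero), hM.1.cfc_eq]
  simp [IsHermitian.cfc, Unitary.conjStarAlgAut_apply]

lemma norm_psdSqrt {M : Matrix (Fin d) (Fin d) ℝ} (hM : M.PosSemidef) :
    ‖psdSqrt M‖ = Real.sqrt ‖M‖ := by
  rw [psdSqrt_eq hM]
  have h1 : ‖hM.sqrtᴴ * hM.sqrt‖ = ‖hM.sqrt‖ * ‖hM.sqrt‖ :=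
    Matrix.l2_opNorm_conjTranspose_mul_self _
  rw [hM.posSemidef_sqrt.isHermitian.eq, hM.sqrt_mul_self] at h1
  rw [h1, Real.sqrt_mul_self (norm_nonneg _)]

lemma sqrt_add_le {a b : ℝ} (ha : 0 ≤ a) (hb : 0 ≤ b) :
    Real.sqrt (a + b) ≤ Real.sqrt a + Real.sqrt b := by
  have h := Real.sqrt_le_sqrt (show a + b ≤ (Real.sqrt a + Real.sqrt b) ^ 2 by
    nlinarith [Real.sq_sqrt ha, Real.sq_sqrt hb, Real.sqrt_nonneg a, Real.sqrt_nonneg b])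
  rwa [Real.sqrt_sq (by positivity)] at h

end Aux

/-- for vectors `v₁,…,vₙ ∈ ℝ^d` and positive semidefinite `Q₁,…,Qₙ`,
`‖(Σ (vᵢvᵢᵀ − Qᵢ)²)^{1/2}‖ ≤ sqrt(2 maxᵢ|vᵢ|² ‖Σ vᵢvᵢᵀ‖) + sqrt(2 maxᵢ‖Qᵢ‖ ‖Σ Qᵢ‖)`. -/
theorem stmt9 {d n : ℕ} (hn : 0 < n) (v : Fin n → Fin d → ℝ)
    (Q : Fin n → Matrix (Fin d) (Fin d) ℝ) (hQ : ∀ i, (Q i).PosSemidef) :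
    specNorm (psdSqrt (∑ i, (Matrix.vecMulVec (v i) (v i) - Q i) ^ 2)) ≤
      Real.sqrt (2 * (⨆ i, ∑ j, v i j ^ 2) *
          specNorm (∑ i, Matrix.vecMulVec (v i) (v i))) +
        Real.sqrt (2 * (⨆ i, specNorm (Q i)) * specNorm (∑ i, Q i)) := by
  classical
  have hne : Nonempty (Fin n) := ⟨⟨0, hn⟩⟩
  set c : ℝ := ⨆ i, ∑ j, v i j ^ 2 with hc
  set c' : ℝ := ⨆ i, specNorm (Q i) with hc'
  have hbdd1 : BddAbove (Set.range fun i : Fin n => ∑ j, v i j ^ 2) :=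
    (Set.finite_range _).bddAbove
  have hbdd2 : BddAbove (Set.range fun i : Fin n => specNorm (Q i)) :=
    (Set.finite_range _).bddAbove
  have hdot : ∀ i, v i ⬝ᵥ v i = ∑ j, v i j ^ 2 := fun i => by
    simp [dotProduct, sq]
  have hc_le : ∀ i, v i ⬝ᵥ v i ≤ c := fun i => by
    rw [hdot i]; exact le_ciSup hbdd1 i
  have hc0 : 0 ≤ c := le_trans (by positivity) (le_ciSup hbdd1 ⟨0, hn⟩)
  have hq_le : ∀ i, ‖Q i‖ ≤ c' := fun i => by
    rw [← specNorm_eq_norm]; exact le_ciSup hbdd2 i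
  have hc'0 : 0 ≤ c' := le_trans (norm_nonneg (Q ⟨0, hn⟩)) (hq_le ⟨0, hn⟩)
  have hHerm : ∀ i : Fin n, (vecMulVec (v i) (v i) - Q i).IsHermitian := fun i =>
    (vmv_hermitian (v i)).sub (hQ i).1
  set M : Matrix (Fin d) (Fin d) ℝ := ∑ i, (vecMulVec (v i) (v i) - Q i) ^ 2 with hM
  have hMpsd : M.PosSemidef := psd_sum _ _ fun i _ => herm_sq_psd (hHerm i)
  set SA : Matrix (Fin d) (Fin d) ℝ := ∑ i, vecMulVec (v i) (v i) with hSA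
  set SQ : Matrix (Fin d) (Fin d) ℝ := ∑ i, Q i with hSQ
  set N : Matrix (Fin d) (Fin d) ℝ := (2*c) • SA + (2*c') • SQ with hN
  have hNM : (N - M).PosSemidef := by
    have hsplit : N - M =
        ∑ i, ((2*c) • vecMulVec (v i) (v i) + (2*c') • Q i
          - (vecMulVec (v i) (v i) - Q i) ^ 2) := by
      rw [Finset.sum_sub_distrib, Finset.sum_add_distrib, ← Finset.smul_sum, ← Finset.smul_sum]
    rw [hsplit]
    refine psd_sum _ _ fun i _ => ?_
    have e : (2*c) • vecMulVec (v i) (v i) + (2*c') • Q i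
          - (vecMulVec (v i) (v i) - Q i) ^ 2
        = (2:ℝ) • (c • vecMulVec (v i) (v i) - vecMulVec (v i) (v i) * vecMulVec (v i) (v i))
          + (2:ℝ) • (c' • Q i - Q i * Q i)
          + (vecMulVec (v i) (v i) + Q i) ^ 2 := by
      simp only [pow_two, mul_sub, sub_mul, mul_add, add_mul]
      module
    rw [e]
    have p1 : (c • vecMulVec (v i) (v i)
        - vecMulVec (v i) (v i) * vecMulVec (v i) (v i)).PosSemidef := by
      rw [vmv_sq (v i), ← sub_smul]
      exact psd_smul (vmv_psd (v i)) (sub_nonneg.mpr (hc_le i))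
    have p2 : (c' • Q i - Q i * Q i).PosSemidef := psd_sq_le (hQ i) (hq_le i)
    have p3 : ((vecMulVec (v i) (v i) + Q i) ^ 2).PosSemidef :=
      herm_sq_psd ((vmv_hermitian (v i)).add (hQ i).1)
    exact ((psd_smul p1 (by norm_num)).add (psd_smul p2 (by norm_num))).add p3
  have hMnorm : ‖M‖ ≤ 2*c*‖SA‖ + 2*c'*‖SQ‖ := by
    refine (norm_mono hMpsd hNM).trans ?_
    rw [hN]
    refine (norm_add_le _ _).trans ?_
    rw [norm_smul, norm_smul, Real.norm_eq_abs, Real.norm_eq_abs,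
      abs_of_nonneg (by linarith), abs_of_nonneg (by linarith)]
  simp only [specNorm_eq_norm]
  rw [norm_psdSqrt hMpsd]
  calc Real.sqrt ‖M‖ ≤ Real.sqrt (2*c*‖SA‖ + 2*c'*‖SQ‖) := Real.sqrt_le_sqrt hMnorm
    _ ≤ Real.sqrt (2*c*‖SA‖) + Real.sqrt (2*c'*‖SQ‖) :=
        sqrt_add_le (by positivity) (by positivity)
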